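/- Let G be a nontrivial connected graph of order n and let C be an identifying code of G □ K₂ with m₁ codewords in the first G-fiber and m₂ codewords in the second G-fiber. Then n ≤ min{2^{m₁} − 1 + m₂, 2^{m₂} − 1 + m₁}. -/

import Mathlib

open SimpleGraph

variable {V W : Type} 

/-- Closed neighborhood of a vertex. -/
def cN (G : SimpleGraph V) (v : V) : Set V := insert v (G.neighborSet v)

/-- `C` is a dominating set of `G`. -/
def IsDomSet (G : SimpleGraph V) (C : Set V) : Prop :=
  ∀ v : V, (cN G v ∩ C).Nonempty

/-- `C` is an identifying code of `G`. -/
def IsIDCode (G : SimpleGraph V) (C : Set V) : Prop :=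
  IsDomSet G C ∧ ∀ u v : V, u ≠ v → cN G u ∩ C ≠ cN G v ∩ C

/-- The identifying code number `γ^{ID}(G)`. -/
noncomputable def idNum (G : SimpleGraph V) : ℕ :=
  sInf {k | ∃ C : Set V, IsIDCode G C ∧ C.ncard = k}

/-- The domination number `γ(G)`. -/
noncomputable def domNum (G : SimpleGraph V) : ℕ :=
  sInf {k | ∃ C : Set V, IsDomSet G C ∧ C.ncard = k}

/-- A graph is twin-free if distinct vertices have distinct closed neighborhoods. -/
def TwinFree (G : SimpleGraph V) : Prop :=
  ∀ u v : V, cN G u = cN G v → u = v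

/-- A 2-packing: vertices pairwise at distance at least 3. -/
def IsTwoPacking (G : SimpleGraph V) (S : Set V) : Prop :=
  ∀ u ∈ S, ∀ v ∈ S, u ≠ v → 3 ≤ G.dist u v

/-- The 2-packing number `ρ₂(G)`. -/
noncomputable def pack2 (G : SimpleGraph V) : ℕ :=
  sSup {k | ∃ S : Set V, IsTwoPacking G S ∧ S.ncard = k}

/-- The prism of `G`: Cartesian product with `K₂`. -/
abbrev prism (G : SimpleGraph V) : SimpleGraph (V × Fin 2) :=
  G □ (⊤ : SimpleGraph (Fin 2))

/-- The graph `A_k` on `2k` vertices `x₁,…,x_{2k}`, with `xᵢ ~ xⱼ` iff `|i-j| ≤ k-1`. -/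
def graphA (k : ℕ) : SimpleGraph (Fin (2 * k)) :=
  SimpleGraph.fromRel (fun i j => |(i : ℤ) - (j : ℤ)| ≤ (k : ℤ) - 1)

/-- The join `G ⋈ H` of two graphs. -/
def joinG (G : SimpleGraph V) (H : SimpleGraph W) : SimpleGraph (V ⊕ W) :=
  SimpleGraph.fromRel (fun a b =>
    match a, b with
    | Sum.inl u, Sum.inl v => G.Adj u v
    | Sum.inr u, Sum.inr v => H.Adj u v
    | _, _ => True)

/-- The corona `H ∘ K₁`: add a pendant vertex to each vertex. -/
def corona (H : SimpleGraph V) : SimpleGraph (V ⊕ V) :=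
  SimpleGraph.fromRel (fun a b =>
    match a, b with
    | Sum.inl u, Sum.inl v => H.Adj u v
    | Sum.inl u, Sum.inr v => u = v
    | _, _ => False)

/-- The class `𝒜`: closure of `{A_k : k ≥ 1}` under join, up to isomorphism. -/
inductive ClassA : {V : Type} → SimpleGraph V → Prop
  | base (k : ℕ) (hk : 1 ≤ k) : ClassA (graphA k)
  | join {V W : Type} (G : SimpleGraph V) (H : SimpleGraph W) :
      ClassA G → ClassA H → ClassA (joinG G H)
  | iso {V W : Type} (G : SimpleGraph V) (H : SimpleGraph W) :
      ClassA G → (G ≃g H) → ClassA H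

/-- Membership in `𝒜 ⋈ K₁`. -/
def ClassAJoinK1 (G : SimpleGraph V) : Prop :=
  ∃ (W : Type) (H : SimpleGraph W), ClassA H ∧
    Nonempty (G ≃g joinG H (⊤ : SimpleGraph Unit))

lemma cN_prism_mem {V : Type} (G : SimpleGraph V) (v : V) (i j : Fin 2) (hij : i ≠ j)
    (p : V × Fin 2) (hp : p ∈ cN (prism G) (v, i)) : p.2 = i ∨ p = (v, j) := by
  rcases hp with hp | hp
  · left; rw [hp]
  · rw [SimpleGraph.mem_neighborSet, SimpleGraph.boxProd_adj] at hp
    rcases hp with ⟨_, h2⟩ | ⟨h1, h2⟩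
    · left; exact h2.symm
    · right
      have hne : p.2 ≠ i := fun h => ((SimpleGraph.top_adj _ _).mp h1) h.symm
      have hj : p.2 = j := by
        have a := Fin.val_ne_of_ne hne
        have b := Fin.val_ne_of_ne hij
        have c := p.2.isLt; have d := i.isLt; have e := j.isLt
        exact Fin.ext (by omega)
      exact Prod.ext h2.symm hj

lemma stmt4_aux {V : Type} [Fintype V] (G : SimpleGraph V) (C : Set (V × Fin 2))
    (hC : IsIDCode (prism G) C) (i j : Fin 2) (hij : i ≠ j) :
    Fintype.card V ≤ 2 ^ (C ∩ {p | p.2 = i}).ncard - 1 + (C ∩ {p | p.2 = j}).ncard := by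
  classical
  set Ci : Finset (V × Fin 2) := (C ∩ {p | p.2 = i}).toFinset with hCi
  set Cj : Finset (V × Fin 2) := (C ∩ {p | p.2 = j}).toFinset with hCj
  have hci : (C ∩ {p | p.2 = i}).ncard = Ci.card := Set.ncard_eq_toFinset_card' _
  have hcj : (C ∩ {p | p.2 = j}).ncard = Cj.card := Set.ncard_eq_toFinset_card' _
  rw [hci, hcj]
  set A : Finset V := Finset.univ.filter (fun v => (v, j) ∈ C) with hA
  set B : Finset V := Finset.univ.filter (fun v => (v, j) ∉ C) with hB
  have hsplit : Fintype.card V = A.card + B.card := by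
    rw [hA, hB, Finset.card_filter_add_card_filter_not, Finset.card_univ]
  rw [hsplit]
  have hAle : A.card ≤ Cj.card := by
    apply Finset.card_le_card_of_injOn (fun v => (v, j))
    · intro v hv
      simp only [hA, Finset.mem_coe, Finset.mem_filter] at hv
      simp [hCj, Set.mem_toFinset, hv.2]
    · intro a _ b _ hab
      exact (Prod.mk.injEq _ _ _ _).mp hab |>.1
  have hBle : B.card ≤ 2 ^ Ci.card - 1 := by
    have : B.card ≤ (Ci.powerset.erase ∅).card := by
      apply Finset.card_le_card_of_injOn (fun v => (cN (prism G) (v, i) ∩ C).toFinset)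
      · intro v hv
        simp only [hB, Finset.mem_coe, Finset.mem_filter] at hv
        rw [Finset.mem_coe, Finset.mem_erase, Finset.mem_powerset]
        constructor
        · have := (hC.1 (v, i))
          intro h
          rw [← Set.toFinset_nonempty] at this
          exact this.ne_empty h
        · intro p hp
          rw [Set.mem_toFinset] at hp
          rcases cN_prism_mem G v i j hij p hp.1 with h | h
          · simp [hCi, Set.mem_toFinset]; exact ⟨hp.2, h⟩
          · exact absurd (h ▸ hp.2) hv.2
      · intro a _ b _ hab
        by_contra hne
        exact hC.2 (a, i) (b, i) (by simp [hne]) (Set.toFinset_inj.mp hab)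
    calc B.card ≤ (Ci.powerset.erase ∅).card := this
      _ = 2 ^ Ci.card - 1 := by
        rw [Finset.card_erase_of_mem (Finset.empty_mem_powerset _), Finset.card_powerset]
  omega

/-- if C is an ID code of the prism of a nontrivial connected graph of
order n with mᵢ codewords in fiber i, then n ≤ min(2^{m₁}-1+m₂, 2^{m₂}-1+m₁). -/
theorem stmt4 {V : Type} [Fintype V] (G : SimpleGraph V) (hconn : G.Connected)
    (hnt : 1 < Fintype.card V) (C : Set (V × Fin 2)) (hC : IsIDCode (prism G) C)
    (m1 m2 : ℕ) (hm1 : (C ∩ {p | p.2 = 0}).ncard = m1)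
    (hm2 : (C ∩ {p | p.2 = 1}).ncard = m2) :
    Fintype.card V ≤ min (2 ^ m1 - 1 + m2) (2 ^ m2 - 1 + m1) := by
  have h1 := stmt4_aux G C hC 0 1 (by decide)
  have h2 := stmt4_aux G C hC 1 0 (by decide)
  rw [hm1, hm2] at h1 h2
  omega
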